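/- Let α ∈ T_n be an idempotent of rank l with image A. An element β ∈ T_n has stable rank l in (T_n, *_α) if and only if the restriction of βα to A is a bijection of A. -/

import Mathlib

/-- The sandwich multiplication `β *_α γ = βαγ` (left-to-right composition). -/
def vmul {n : ℕ} (α β γ : Fin n → Fin n) : Fin n → Fin n :=
  fun x => γ (α (β x))

/-- `vpow α β m = β^{*(m+1)}`, the positive `*_α`-powers of `β`. -/
def vpow {n : ℕ} (α β : Fin n → Fin n) : ℕ → (Fin n → Fin n)
  | 0 => β
  | m + 1 => vmul α (vpow α β m) β

/-- The rank of a transformation: the cardinality of its image. -/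
def rank {n : ℕ} (f : Fin n → Fin n) : ℕ := (Finset.image f Finset.univ).card

/-- The restriction of `βα` to `A = im(α)`, as a map `A → A`. -/
def phibar {n : ℕ} (α β : Fin n → Fin n) : Set.range α → Set.range α :=
  fun x => ⟨α (β x.1), ⟨β x.1, rfl⟩⟩

/-- `β` has stable rank `l = rank α` in `(T_n, *_α)` iff the restriction
of `βα` to `A = im(α)` is a bijection of `A`. -/
theorem stable_rank_top_iff_bijective {n l : ℕ} (α : Fin n → Fin n)
    (hα : ∀ x, α (α x) = α x) (hl : rank α = l) (β : Fin n → Fin n) :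
    (∃ M : ℕ, ∀ m ≥ M, rank (vpow α β m) = l) ↔
      Function.Bijective (phibar α β) := by
  classical
  set g : Fin n → Fin n := fun x => α (β x) with hg
  set A : Finset (Fin n) := Finset.image α Finset.univ with hA
  have hAcard : A.card = l := hl
  have hmemA : ∀ a, a ∈ A ↔ a ∈ Set.range α := by
    intro a; simp [hA, Finset.mem_image, Set.mem_range, eq_comm]
  have hgA : ∀ x, g x ∈ A := by
    intro x; simp only [hA, Finset.mem_image]; exact ⟨β x, Finset.mem_univ _, rfl⟩
  -- vpow as β ∘ g^[m]
  have hvpow : ∀ m, vpow α β m = fun x => β (g^[m] x) := by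
    intro m
    induction m with
    | zero => funext x; simp [vpow]
    | succ m ih =>
      funext x
      simp only [vpow, vmul, ih, Function.iterate_succ_apply']
      rfl
  set S : ℕ → Finset (Fin n) := fun m => Finset.image (g^[m]) Finset.univ with hS
  have hrank : ∀ m, rank (vpow α β m) = (S m |>.image β).card := by
    intro m
    rw [rank, hvpow m, hS]
    rw [Finset.image_image]
    rfl
  have hSsucc : ∀ m, S (m + 1) = (S m).image g := by
    intro m
    simp only [hS, Finset.image_image]
    congr 1
    exact Function.iterate_succ' g m
  have hSsubA : ∀ m, S (m + 1) ⊆ A := by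
    intro m a ha
    rw [hSsucc] at ha
    obtain ⟨x, _, rfl⟩ := Finset.mem_image.mp ha
    exact hgA x
  constructor
  · rintro ⟨M, hM⟩
    -- S (M+1) = A and S (M+2) = A
    have key : ∀ m, rank (vpow α β (m + 1)) = l → S (m + 1) = A := by
      intro m hr
      rw [hrank] at hr
      have h1 : (S (m + 1)).card ≤ A.card := Finset.card_le_card (hSsubA m)
      have h2 : ((S (m + 1)).image β).card ≤ (S (m + 1)).card :=
        Finset.card_image_le
      have : A.card ≤ (S (m + 1)).card := by omega
      exact Finset.eq_of_subset_of_card_le (hSsubA m) this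
    have e1 : S (M + 1) = A := key M (hM _ (by omega))
    have e2 : S (M + 2) = A := key (M + 1) (hM _ (by omega))
    have hgimg : A.image g = A := by
      rw [← e1, ← hSsucc, e2, e1]
    have hsurj : Function.Surjective (phibar α β) := by
      rintro ⟨a, ha⟩
      have haA : a ∈ A := (hmemA a).mpr ha
      rw [← hgimg] at haA
      obtain ⟨x, hxA, hx⟩ := Finset.mem_image.mp haA
      exact ⟨⟨x, (hmemA x).mp hxA⟩, Subtype.ext hx⟩
    exact Finite.surjective_iff_bijective.mp hsurj
  · intro hbij
    -- surjectivity: A ⊆ image g A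
    have hAsub : A ⊆ A.image g := by
      intro a ha
      obtain ⟨⟨x, hx⟩, hfx⟩ := hbij.surjective ⟨a, (hmemA a).mp ha⟩
      have : g x = a := congrArg Subtype.val hfx
      exact Finset.mem_image.mpr ⟨x, (hmemA x).mpr hx, this⟩
    have hASm : ∀ m, A ⊆ S m := by
      intro m
      induction m with
      | zero => intro a _; simp [hS]
      | succ m ih =>
        rw [hSsucc]
        exact hAsub.trans (Finset.image_subset_image ih)
    have hinj : Set.InjOn β A := by
      intro x hx y hy hxy
      have hx' : x ∈ Set.range α := (hmemA x).mp hx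
      have hy' : y ∈ Set.range α := (hmemA y).mp hy
      have : phibar α β ⟨x, hx'⟩ = phibar α β ⟨y, hy'⟩ := by
        apply Subtype.ext
        simp only [phibar, hxy]
      exact congrArg Subtype.val (hbij.injective this)
    refine ⟨1, fun m hm => ?_⟩
    obtain ⟨k, rfl⟩ : ∃ k, m = k + 1 := ⟨m - 1, by omega⟩
    have hSA : S (k + 1) = A :=
      Finset.Subset.antisymm (hSsubA k) (hASm (k + 1))
    rw [hrank, hSA, Finset.card_image_of_injOn hinj, hAcard]
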